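/- The factorized Felderhof scalar product satisfies the claimed recursion: let S_n(u,p;v,q;w,r) be the product formula S_n = ∏_{j=1}^n [2p_j]^{1/2} ∏_{j=1}^N [2q_j]^{1/2} ∏_{j=1}^{Ñ} [2r_j]^{1/2} · ∏_{j<k≤n}[u_k-u_j+p_j+p_k] ∏_{j<k≤N}[v_j-v_k+q_j+q_k] ∏_{j<k≤Ñ}[w_k-w_j+r_j+r_k] · ∏_{j=1}^n ∏_{k=1}^{Ñ}[w_k-u_j+p_j+r_k] · ∏_{j=1}^N ∏_{k=Ñ+1}^M [v_j-w_k+q_j-r_k] · ∏_{j=1}^n ∏_{k=1}^N [u_j+p_j-v_k-q_k]^{-1} · ∏_{j=1}^n ( (−1)^N ∏_{k=1}^M [u_j+p_j-w_k+r_k] + ∏_{k=1}^M [u_j+p_j-w_k-r_k] ), with Ñ = N−n. Then setting u_n + p_n = w_{Ñ+1} + r_{Ñ+1} yields S_n = [2p_n]^{1/2}[2r_{Ñ+1}]^{1/2} · ∏_{1≤j<Ñ+1}[w_j-w_{Ñ+1}+r_j-r_{Ñ+1}+2p_n] · ∏_{Ñ+1<j≤M}[w_{Ñ+1}-w_j+r_j+r_{Ñ+1}]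 · S_{n-1}, where S_{n-1} is the same formula with n replaced by n−1 (and Ñ by Ñ+1). -/

import Mathlib

open Finset

/-- The factorized expression for the intermediate Bethe scalar product `S_n` of the
trigonometric Felderhof model. Here `sp`, `sq`, `sr` are the chosen square roots
`[2p_j]^{1/2}`, `[2q_j]^{1/2}`, `[2r_j]^{1/2}`, and `Ñ = N - n`. -/
noncomputable def SFel {n N M : ℕ} (u p : Fin n → ℂ) (v q : Fin N → ℂ)
    (w r : Fin M → ℂ) (sp : Fin n → ℂ) (sq : Fin N → ℂ) (sr : Fin M → ℂ)
    (hn : n ≤ N) (hNM : N ≤ M) : ℂ :=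
  (∏ j, sp j) * (∏ j, sq j) *
  (∏ j : Fin (N - n), sr ⟨j, by have := j.isLt; omega⟩) *
  (∏ j : Fin n, ∏ k ∈ Ioi j, Complex.sinh (u k - u j + p j + p k)) *
  (∏ j : Fin N, ∏ k ∈ Ioi j, Complex.sinh (v j - v k + q j + q k)) *
  (∏ j : Fin (N - n), ∏ k ∈ Ioi j,
    Complex.sinh (w ⟨k, by have := k.isLt; omega⟩ - w ⟨j, by have := j.isLt; omega⟩ +
      r ⟨j, by have := j.isLt; omega⟩ + r ⟨k, by have := k.isLt; omega⟩)) *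
  (∏ j : Fin n, ∏ k : Fin (N - n),
    Complex.sinh (w ⟨k, by have := k.isLt; omega⟩ - u j + p j +
      r ⟨k, by have := k.isLt; omega⟩)) *
  (∏ j : Fin N, ∏ k ∈ Finset.univ.filter (fun k : Fin M => N - n ≤ (k : ℕ)),
    Complex.sinh (v j - w k + q j - r k)) *
  (∏ j : Fin n, ∏ k : Fin N, (Complex.sinh (u j + p j - v k - q k))⁻¹) *
  (∏ j : Fin n,
    ((-1 : ℂ) ^ N * (∏ k, Complex.sinh (u j + p j - w k + r k)) +
      ∏ k, Complex.sinh (u j + p j - w k - r k)))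

noncomputable def extf {k : ℕ} (f : Fin k → ℂ) (a : ℕ) : ℂ :=
  if h : a < k then f ⟨a, h⟩ else 0

lemma extf_apply {k : ℕ} (f : Fin k → ℂ) (a : ℕ) (h : a < k) :
    extf f a = f ⟨a, h⟩ := dif_pos h

@[simp] lemma extf_val {k : ℕ} (f : Fin k → ℂ) (j : Fin k) :
    extf f (j : ℕ) = f j := by simp [extf]

lemma prod_val_Ioi {t : ℕ} (g : ℕ → ℂ) (j : Fin t) :
    ∏ k ∈ Ioi j, g (k : ℕ) = ∏ k ∈ Ico ((j : ℕ) + 1) t, g k := by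
  have h1 : ∏ k ∈ Ioi j, g (k : ℕ) = ∏ x ∈ (Ioi j).map Fin.valEmbedding, g x := by
    rw [Finset.prod_map]; rfl
  rw [h1, Fin.map_valEmbedding_Ioi]
  apply Finset.prod_congr _ fun _ _ => rfl
  ext x
  have := j.isLt
  simp only [mem_Ioo, mem_Ico]
  omega

lemma prod_fin_Ioi (t : ℕ) (g : ℕ → ℕ → ℂ) :
    ∏ j : Fin t, ∏ k ∈ Ioi j, g (j : ℕ) (k : ℕ)
      = ∏ j ∈ range t, ∏ k ∈ Ico (j + 1) t, g j k := by
  rw [← Fin.prod_univ_eq_prod_range (fun a => ∏ k ∈ Ico (a + 1) t, g a k)]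
  exact Finset.prod_congr rfl fun j _ => prod_val_Ioi (g (j : ℕ)) j

lemma range_Ioi_split (t : ℕ) (g : ℕ → ℕ → ℂ) :
    ∏ j ∈ range (t + 1), ∏ k ∈ Ico (j + 1) (t + 1), g j k
      = (∏ j ∈ range t, ∏ k ∈ Ico (j + 1) t, g j k) * ∏ j ∈ range t, g j t := by
  rw [prod_range_succ, Ico_self, prod_empty, mul_one, ← prod_mul_distrib]
  exact Finset.prod_congr rfl fun j hj =>
    prod_Ico_succ_top (by have := mem_range.mp hj; omega) _

lemma prod_val_filter {M : ℕ} (p : ℕ → Prop) [DecidablePred p] (g : ℕ → ℂ) :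
    ∏ k ∈ Finset.univ.filter (fun k : Fin M => p (k : ℕ)), g (k : ℕ)
      = ∏ k ∈ (range M).filter p, g k := by
  have h1 : ∏ k ∈ Finset.univ.filter (fun k : Fin M => p (k : ℕ)), g (k : ℕ)
      = ∏ x ∈ (Finset.univ.filter (fun k : Fin M => p (k : ℕ))).map Fin.valEmbedding, g x := by
    rw [Finset.prod_map]; rfl
  rw [h1]
  apply Finset.prod_congr _ fun _ _ => rfl
  ext x
  simp only [mem_map, mem_filter, mem_range, Fin.valEmbedding_apply, mem_univ, true_and]
  constructor
  · rintro ⟨a, hpa, rfl⟩; exact ⟨a.2, hpa⟩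
  · rintro ⟨hx, hpx⟩; exact ⟨⟨x, hx⟩, hpx, rfl⟩

lemma SFel_nat {n N M : ℕ} (u p : Fin n → ℂ) (v q : Fin N → ℂ)
    (w r : Fin M → ℂ) (sp : Fin n → ℂ) (sq : Fin N → ℂ) (sr : Fin M → ℂ)
    (hn : n ≤ N) (hNM : N ≤ M) :
    SFel u p v q w r sp sq sr hn hNM =
  (∏ j ∈ range n, extf sp j) * (∏ j, sq j) *
  (∏ j ∈ range (N - n), extf sr j) *
  (∏ j ∈ range n, ∏ k ∈ Ico (j + 1) n,
    Complex.sinh (extf u k - extf u j + extf p j + extf p k)) *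
  (∏ j : Fin N, ∏ k ∈ Ioi j, Complex.sinh (v j - v k + q j + q k)) *
  (∏ j ∈ range (N - n), ∏ k ∈ Ico (j + 1) (N - n),
    Complex.sinh (extf w k - extf w j + extf r j + extf r k)) *
  (∏ j ∈ range n, ∏ k ∈ range (N - n),
    Complex.sinh (extf w k - extf u j + extf p j + extf r k)) *
  (∏ j : Fin N, ∏ k ∈ Ico (N - n) M,
    Complex.sinh (v j - extf w k + q j - extf r k)) *
  (∏ j ∈ range n, ∏ k : Fin N, (Complex.sinh (extf u j + extf p j - v k - q k))⁻¹) *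
  (∏ j ∈ range n,
    ((-1 : ℂ) ^ N * (∏ k ∈ range M, Complex.sinh (extf u j + extf p j - extf w k + extf r k)) +
      ∏ k ∈ range M, Complex.sinh (extf u j + extf p j - extf w k - extf r k))) := by
  have hnM : n ≤ M := le_trans hn hNM
  unfold SFel
  have h1 : (∏ j, sp j) = ∏ j ∈ range n, extf sp j := by
    rw [← Fin.prod_univ_eq_prod_range (extf sp)]
    exact Finset.prod_congr rfl fun j _ => (extf_val sp j).symm
  have h3 : (∏ j : Fin (N - n), sr ⟨j, by have := j.isLt; omega⟩)
      = ∏ j ∈ range (N - n), extf sr j := by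
    rw [← Fin.prod_univ_eq_prod_range (extf sr)]
    exact Finset.prod_congr rfl fun j _ => (extf_apply sr _ (by have := j.isLt; omega)).symm
  have h4 : (∏ j : Fin n, ∏ k ∈ Ioi j, Complex.sinh (u k - u j + p j + p k))
      = ∏ j ∈ range n, ∏ k ∈ Ico (j + 1) n,
          Complex.sinh (extf u k - extf u j + extf p j + extf p k) := by
    rw [← prod_fin_Ioi n (fun a b => Complex.sinh (extf u b - extf u a + extf p a + extf p b))]
    exact Finset.prod_congr rfl fun j _ => Finset.prod_congr rfl fun k _ => by simp
  have h6 : (∏ j : Fin (N - n), ∏ k ∈ Ioi j,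
        Complex.sinh (w ⟨k, by have := k.isLt; omega⟩ - w ⟨j, by have := j.isLt; omega⟩ +
          r ⟨j, by have := j.isLt; omega⟩ + r ⟨k, by have := k.isLt; omega⟩))
      = ∏ j ∈ range (N - n), ∏ k ∈ Ico (j + 1) (N - n),
          Complex.sinh (extf w k - extf w j + extf r j + extf r k) := by
    rw [← prod_fin_Ioi (N - n) (fun a b => Complex.sinh (extf w b - extf w a + extf r a + extf r b))]
    refine Finset.prod_congr rfl fun j _ => Finset.prod_congr rfl fun k _ => ?_
    rw [extf_apply w _ (by have := k.isLt; omega), extf_apply w _ (by have := j.isLt; omega),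
      extf_apply r _ (by have := j.isLt; omega), extf_apply r _ (by have := k.isLt; omega)]
  have h7 : (∏ j : Fin n, ∏ k : Fin (N - n),
        Complex.sinh (w ⟨k, by have := k.isLt; omega⟩ - u j + p j +
          r ⟨k, by have := k.isLt; omega⟩))
      = ∏ j ∈ range n, ∏ k ∈ range (N - n),
          Complex.sinh (extf w k - extf u j + extf p j + extf r k) := by
    rw [← Fin.prod_univ_eq_prod_range (fun a => ∏ k ∈ range (N - n),
      Complex.sinh (extf w k - extf u a + extf p a + extf r k))]
    refine Finset.prod_congr rfl fun j _ => ?_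
    rw [← Fin.prod_univ_eq_prod_range (fun b =>
      Complex.sinh (extf w b - extf u (j : ℕ) + extf p (j : ℕ) + extf r b))]
    refine Finset.prod_congr rfl fun k _ => ?_
    rw [extf_apply w _ (by have := k.isLt; omega), extf_apply r _ (by have := k.isLt; omega),
      extf_val u j, extf_val p j]
  have h8 : (∏ j : Fin N, ∏ k ∈ Finset.univ.filter (fun k : Fin M => N - n ≤ (k : ℕ)),
        Complex.sinh (v j - w k + q j - r k))
      = ∏ j : Fin N, ∏ k ∈ Ico (N - n) M,
          Complex.sinh (v j - extf w k + q j - extf r k) := by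
    refine Finset.prod_congr rfl fun j _ => ?_
    have := prod_val_filter (M := M) (fun a => N - n ≤ a)
      (fun a => Complex.sinh (v j - extf w a + q j - extf r a))
    rw [show (range M).filter (fun a => N - n ≤ a) = Ico (N - n) M by
      ext x; simp only [mem_filter, mem_range, mem_Ico]; omega] at this
    rw [← this]
    exact Finset.prod_congr rfl fun k _ => by simp
  have h9 : (∏ j : Fin n, ∏ k : Fin N, (Complex.sinh (u j + p j - v k - q k))⁻¹)
      = ∏ j ∈ range n, ∏ k : Fin N, (Complex.sinh (extf u j + extf p j - v k - q k))⁻¹ := by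
    rw [← Fin.prod_univ_eq_prod_range (fun a => ∏ k : Fin N,
      (Complex.sinh (extf u a + extf p a - v k - q k))⁻¹)]
    exact Finset.prod_congr rfl fun j _ => by simp
  have h10 : (∏ j : Fin n,
        ((-1 : ℂ) ^ N * (∏ k, Complex.sinh (u j + p j - w k + r k)) +
          ∏ k, Complex.sinh (u j + p j - w k - r k)))
      = ∏ j ∈ range n,
        ((-1 : ℂ) ^ N * (∏ k ∈ range M, Complex.sinh (extf u j + extf p j - extf w k + extf r k)) +
          ∏ k ∈ range M, Complex.sinh (extf u j + extf p j - extf w k - extf r k)) := by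
    rw [← Fin.prod_univ_eq_prod_range (fun a =>
      (-1 : ℂ) ^ N * (∏ k ∈ range M, Complex.sinh (extf u a + extf p a - extf w k + extf r k)) +
        ∏ k ∈ range M, Complex.sinh (extf u a + extf p a - extf w k - extf r k))]
    refine Finset.prod_congr rfl fun j _ => ?_
    have e1 : (∏ k, Complex.sinh (u j + p j - w k + r k))
        = ∏ k ∈ range M, Complex.sinh (extf u (j : ℕ) + extf p (j : ℕ) - extf w k + extf r k) := by
      rw [← Fin.prod_univ_eq_prod_range (fun b =>
        Complex.sinh (extf u (j : ℕ) + extf p (j : ℕ) - extf w b + extf r b))]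
      exact Finset.prod_congr rfl fun k _ => by simp
    have e2 : (∏ k, Complex.sinh (u j + p j - w k - r k))
        = ∏ k ∈ range M, Complex.sinh (extf u (j : ℕ) + extf p (j : ℕ) - extf w k - extf r k) := by
      rw [← Fin.prod_univ_eq_prod_range (fun b =>
        Complex.sinh (extf u (j : ℕ) + extf p (j : ℕ) - extf w b - extf r b))]
      exact Finset.prod_congr rfl fun k _ => by simp
    rw [e1, e2]
  rw [h1, h3, h4, h6, h7, h8, h9, h10]

lemma extf_comp {k : ℕ} (f : Fin (k + 1) → ℂ) {a : ℕ} (h : a < k) :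
    extf (f ∘ Fin.castSucc) a = extf f a := by
  rw [extf_apply _ a h, extf_apply f a (Nat.lt_succ_of_lt h)]; rfl


set_option maxHeartbeats 1600000 in
/-- The recursion for the factorized Felderhof scalar product: setting
`u_n + p_n = w_{Ñ+1} + r_{Ñ+1}` (with `Ñ = N - n`, `n = m + 1`) yields
`S_n = [2p_n]^{1/2}[2r_{Ñ+1}]^{1/2} ∏_{j<Ñ+1}[w_j-w_{Ñ+1}+r_j-r_{Ñ+1}+2p_n]
  ∏_{Ñ+1<j≤M}[w_{Ñ+1}-w_j+r_j+r_{Ñ+1}] · S_{n-1}`. -/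
theorem sFel_recursion {m N M : ℕ} (hm : m + 1 ≤ N) (hNM : N ≤ M)
    (u p : Fin (m + 1) → ℂ) (v q : Fin N → ℂ) (w r : Fin M → ℂ)
    (sp : Fin (m + 1) → ℂ) (sq : Fin N → ℂ) (sr : Fin M → ℂ)
    (hsp : ∀ j, (sp j) ^ 2 = Complex.sinh (2 * p j))
    (hsq : ∀ j, (sq j) ^ 2 = Complex.sinh (2 * q j))
    (hsr : ∀ j, (sr j) ^ 2 = Complex.sinh (2 * r j))
    (hden : ∀ (j : Fin (m + 1)) (k : Fin N),
      Complex.sinh (u j + p j - v k - q k) ≠ 0)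
    (hbethe : ∀ j : Fin N,
      (-1 : ℂ) ^ N * (∏ k, Complex.sinh (v j + q j - w k + r k)) +
        ∏ k, Complex.sinh (v j + q j - w k - r k) = 0)
    (hu : u (Fin.last m) + p (Fin.last m) =
      w ⟨N - (m + 1), by omega⟩ + r ⟨N - (m + 1), by omega⟩) :
    SFel u p v q w r sp sq sr hm hNM =
      sp (Fin.last m) * sr ⟨N - (m + 1), by omega⟩ *
        (∏ j ∈ Finset.univ.filter (fun j : Fin M => (j : ℕ) < N - (m + 1)),
          Complex.sinh (w j - w ⟨N - (m + 1), by omega⟩ + r j -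
            r ⟨N - (m + 1), by omega⟩ + 2 * p (Fin.last m))) *
        (∏ j ∈ Finset.univ.filter (fun j : Fin M => N - (m + 1) < (j : ℕ)),
          Complex.sinh (w ⟨N - (m + 1), by omega⟩ - w j + r j +
            r ⟨N - (m + 1), by omega⟩)) *
        SFel (u ∘ Fin.castSucc) (p ∘ Fin.castSucc) v q w r
          (sp ∘ Fin.castSucc) sq sr (by omega) hNM := by
  rw [SFel_nat u p v q w r sp sq sr hm hNM,
    SFel_nat (u ∘ Fin.castSucc) (p ∘ Fin.castSucc) v q w r
      (sp ∘ Fin.castSucc) sq sr (by omega) hNM]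
  set T := N - (m + 1) with hT
  have htM : T < M := by omega
  have hmm : m < m + 1 := Nat.lt_succ_self m
  have huN : extf u m + extf p m = extf w T + extf r T := by
    rw [extf_apply u m hmm, extf_apply p m hmm, extf_apply w T htM, extf_apply r T htM]
    exact hu
  rw [show N - m = T + 1 by omega]
  -- remove the composed-with-castSucc extensions on the RHS
  have hc1 : ∏ j ∈ range m, extf (sp ∘ Fin.castSucc) j = ∏ j ∈ range m, extf sp j :=
    Finset.prod_congr rfl fun j hj => extf_comp sp (mem_range.mp hj)
  have hc4 : (∏ j ∈ range m, ∏ k ∈ Ico (j + 1) m,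
        Complex.sinh (extf (u ∘ Fin.castSucc) k - extf (u ∘ Fin.castSucc) j +
          extf (p ∘ Fin.castSucc) j + extf (p ∘ Fin.castSucc) k))
      = ∏ j ∈ range m, ∏ k ∈ Ico (j + 1) m,
        Complex.sinh (extf u k - extf u j + extf p j + extf p k) :=
    Finset.prod_congr rfl fun j hj => Finset.prod_congr rfl fun k hk => by
      rw [extf_comp u (mem_range.mp hj), extf_comp p (mem_range.mp hj),
        extf_comp u (mem_Ico.mp hk).2, extf_comp p (mem_Ico.mp hk).2]
  have hc7 : (∏ j ∈ range m, ∏ k ∈ range (T + 1),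
        Complex.sinh (extf w k - extf (u ∘ Fin.castSucc) j +
          extf (p ∘ Fin.castSucc) j + extf r k))
      = ∏ j ∈ range m, ∏ k ∈ range (T + 1),
        Complex.sinh (extf w k - extf u j + extf p j + extf r k) :=
    Finset.prod_congr rfl fun j hj => Finset.prod_congr rfl fun k _ => by
      rw [extf_comp u (mem_range.mp hj), extf_comp p (mem_range.mp hj)]
  have hc9 : (∏ j ∈ range m, ∏ k : Fin N,
        (Complex.sinh (extf (u ∘ Fin.castSucc) j + extf (p ∘ Fin.castSucc) j - v k - q k))⁻¹)
      = ∏ j ∈ range m, ∏ k : Fin N,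
        (Complex.sinh (extf u j + extf p j - v k - q k))⁻¹ :=
    Finset.prod_congr rfl fun j hj => Finset.prod_congr rfl fun k _ => by
      rw [extf_comp u (mem_range.mp hj), extf_comp p (mem_range.mp hj)]
  have hc10 : (∏ j ∈ range m,
        ((-1 : ℂ) ^ N * (∏ k ∈ range M, Complex.sinh (extf (u ∘ Fin.castSucc) j +
            extf (p ∘ Fin.castSucc) j - extf w k + extf r k)) +
          ∏ k ∈ range M, Complex.sinh (extf (u ∘ Fin.castSucc) j +
            extf (p ∘ Fin.castSucc) j - extf w k - extf r k)))
      = ∏ j ∈ range m,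
        ((-1 : ℂ) ^ N * (∏ k ∈ range M, Complex.sinh (extf u j + extf p j - extf w k + extf r k)) +
          ∏ k ∈ range M, Complex.sinh (extf u j + extf p j - extf w k - extf r k)) :=
    Finset.prod_congr rfl fun j hj => by
      rw [extf_comp u (mem_range.mp hj), extf_comp p (mem_range.mp hj)]
  rw [hc1, hc4, hc7, hc9, hc10]
  -- split the `n = m + 1` products on the left
  have eA : ∏ j ∈ range (m + 1), extf sp j = (∏ j ∈ range m, extf sp j) * extf sp m :=
    prod_range_succ _ _
  have eD : (∏ j ∈ range (m + 1), ∏ k ∈ Ico (j + 1) (m + 1),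
        Complex.sinh (extf u k - extf u j + extf p j + extf p k))
      = (∏ j ∈ range m, ∏ k ∈ Ico (j + 1) m,
          Complex.sinh (extf u k - extf u j + extf p j + extf p k)) *
        ∏ j ∈ range m, Complex.sinh (extf u m - extf u j + extf p j + extf p m) :=
    range_Ioi_split m _
  have eG : (∏ j ∈ range (m + 1), ∏ k ∈ range T,
        Complex.sinh (extf w k - extf u j + extf p j + extf r k))
      = (∏ j ∈ range m, ∏ k ∈ range T,
          Complex.sinh (extf w k - extf u j + extf p j + extf r k)) *
        ∏ k ∈ range T, Complex.sinh (extf w k - extf u m + extf p m + extf r k) :=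
    prod_range_succ _ _
  have eGrow : (∏ k ∈ range T, Complex.sinh (extf w k - extf u m + extf p m + extf r k))
      = ∏ k ∈ range T,
          Complex.sinh (extf w k - extf w T + extf r k - extf r T + 2 * extf p m) :=
    Finset.prod_congr rfl fun k _ => congrArg Complex.sinh (by linear_combination -huN)
  have eH : (∏ j : Fin N, ∏ k ∈ Ico T M,
        Complex.sinh (v j - extf w k + q j - extf r k))
      = (∏ j : Fin N, Complex.sinh (v j - extf w T + q j - extf r T)) *
        ∏ j : Fin N, ∏ k ∈ Ico (T + 1) M,
          Complex.sinh (v j - extf w k + q j - extf r k) := by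
    rw [← prod_mul_distrib]
    exact Finset.prod_congr rfl fun j _ => prod_eq_prod_Ico_succ_bot htM _
  have eI : (∏ j ∈ range (m + 1), ∏ k : Fin N,
        (Complex.sinh (extf u j + extf p j - v k - q k))⁻¹)
      = (∏ j ∈ range m, ∏ k : Fin N,
          (Complex.sinh (extf u j + extf p j - v k - q k))⁻¹) *
        ∏ k : Fin N, (Complex.sinh (extf u m + extf p m - v k - q k))⁻¹ :=
    prod_range_succ _ _
  have eJ : (∏ j ∈ range (m + 1),
        ((-1 : ℂ) ^ N * (∏ k ∈ range M, Complex.sinh (extf u j + extf p j - extf w k + extf r k)) +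
          ∏ k ∈ range M, Complex.sinh (extf u j + extf p j - extf w k - extf r k)))
      = (∏ j ∈ range m,
          ((-1 : ℂ) ^ N * (∏ k ∈ range M, Complex.sinh (extf u j + extf p j - extf w k + extf r k)) +
            ∏ k ∈ range M, Complex.sinh (extf u j + extf p j - extf w k - extf r k))) *
        ((-1 : ℂ) ^ N * (∏ k ∈ range M, Complex.sinh (extf u m + extf p m - extf w k + extf r k)) +
          ∏ k ∈ range M, Complex.sinh (extf u m + extf p m - extf w k - extf r k)) :=
    prod_range_succ _ _
  have eB : ((-1 : ℂ) ^ N * (∏ k ∈ range M, Complex.sinh (extf u m + extf p m - extf w k + extf r k)) +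
        ∏ k ∈ range M, Complex.sinh (extf u m + extf p m - extf w k - extf r k))
      = (-1 : ℂ) ^ N * ((extf sr T * extf sr T) *
          (∏ k ∈ range T, Complex.sinh (extf w T - extf w k + extf r k + extf r T)) *
          ∏ k ∈ Ico (T + 1) M, Complex.sinh (extf w T - extf w k + extf r k + extf r T)) := by
    have hz : ∏ k ∈ range M, Complex.sinh (extf u m + extf p m - extf w k - extf r k) = 0 := by
      refine Finset.prod_eq_zero (mem_range.mpr htM) ?_
      rw [show extf u m + extf p m - extf w T - extf r T = 0 by linear_combination huN,
        Complex.sinh_zero]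
    have c2 : Complex.sinh (extf u m + extf p m - extf w T + extf r T) = extf sr T * extf sr T := by
      rw [show extf u m + extf p m - extf w T + extf r T = 2 * extf r T by linear_combination huN,
        extf_apply r T htM, extf_apply sr T htM, ← hsr ⟨T, htM⟩]
      ring
    have h1 : ∏ k ∈ range M, Complex.sinh (extf u m + extf p m - extf w k + extf r k)
        = ((∏ k ∈ range T, Complex.sinh (extf w T - extf w k + extf r k + extf r T)) *
            (extf sr T * extf sr T)) *
          ∏ k ∈ Ico (T + 1) M, Complex.sinh (extf w T - extf w k + extf r k + extf r T) := by
      have cT : (∏ k ∈ range T, Complex.sinh (extf u m + extf p m - extf w k + extf r k))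
          = ∏ k ∈ range T, Complex.sinh (extf w T - extf w k + extf r k + extf r T) :=
        Finset.prod_congr rfl fun k _ => congrArg Complex.sinh (by linear_combination huN)
      have cI : (∏ k ∈ Ico (T + 1) M, Complex.sinh (extf u m + extf p m - extf w k + extf r k))
          = ∏ k ∈ Ico (T + 1) M, Complex.sinh (extf w T - extf w k + extf r k + extf r T) :=
        Finset.prod_congr rfl fun k _ => congrArg Complex.sinh (by linear_combination huN)
      rw [← prod_range_mul_prod_Ico
        (fun k => Complex.sinh (extf u m + extf p m - extf w k + extf r k))
        (show T + 1 ≤ M by omega), prod_range_succ, c2, cT, cI]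
    rw [hz, add_zero, h1]
    ring
  -- split the products on the right
  have eC' : ∏ j ∈ range (T + 1), extf sr j = (∏ j ∈ range T, extf sr j) * extf sr T :=
    prod_range_succ _ _
  have eF' : (∏ j ∈ range (T + 1), ∏ k ∈ Ico (j + 1) (T + 1),
        Complex.sinh (extf w k - extf w j + extf r j + extf r k))
      = (∏ j ∈ range T, ∏ k ∈ Ico (j + 1) T,
          Complex.sinh (extf w k - extf w j + extf r j + extf r k)) *
        ∏ j ∈ range T, Complex.sinh (extf w T - extf w j + extf r j + extf r T) :=
    range_Ioi_split T _
  have eG' : (∏ j ∈ range m, ∏ k ∈ range (T + 1),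
        Complex.sinh (extf w k - extf u j + extf p j + extf r k))
      = (∏ j ∈ range m, ∏ k ∈ range T,
          Complex.sinh (extf w k - extf u j + extf p j + extf r k)) *
        ∏ j ∈ range m, Complex.sinh (extf u m - extf u j + extf p j + extf p m) := by
    rw [← prod_mul_distrib]
    refine Finset.prod_congr rfl fun j _ => ?_
    rw [prod_range_succ]
    congr 1
    exact congrArg Complex.sinh (by linear_combination -huN)
  have esp : sp (Fin.last m) = extf sp m := (extf_apply sp m hmm).symm
  have esr : sr ⟨T, by omega⟩ = extf sr T := (extf_apply sr T htM).symm
  have eP1 : (∏ j ∈ Finset.univ.filter (fun j : Fin M => (j : ℕ) < T),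
        Complex.sinh (w j - w ⟨T, by omega⟩ + r j - r ⟨T, by omega⟩ + 2 * p (Fin.last m)))
      = ∏ k ∈ range T,
          Complex.sinh (extf w k - extf w T + extf r k - extf r T + 2 * extf p m) := by
    have h := prod_val_filter (M := M) (fun a => a < T)
      (fun a => Complex.sinh (extf w a - extf w T + extf r a - extf r T + 2 * extf p m))
    rw [show (range M).filter (fun a => a < T) = range T by
      ext x; simp only [mem_filter, mem_range]; omega] at h
    rw [← h]
    refine Finset.prod_congr rfl fun j _ => ?_
    rw [extf_val w j, extf_val r j, extf_apply w T htM, extf_apply r T htM,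
      extf_apply p m hmm]
    rfl
  have eP2 : (∏ j ∈ Finset.univ.filter (fun j : Fin M => T < (j : ℕ)),
        Complex.sinh (w ⟨T, by omega⟩ - w j + r j + r ⟨T, by omega⟩))
      = ∏ k ∈ Ico (T + 1) M,
          Complex.sinh (extf w T - extf w k + extf r k + extf r T) := by
    have h := prod_val_filter (M := M) (fun a => T < a)
      (fun a => Complex.sinh (extf w T - extf w a + extf r a + extf r T))
    rw [show (range M).filter (fun a => T < a) = Ico (T + 1) M by
      ext x; simp only [mem_filter, mem_range, mem_Ico]; omega] at h
    rw [← h]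
    refine Finset.prod_congr rfl fun j _ => ?_
    rw [extf_val w j, extf_val r j, extf_apply w T htM, extf_apply r T htM]
  have hQZ : (-1 : ℂ) ^ N * (∏ j : Fin N, Complex.sinh (v j - extf w T + q j - extf r T)) *
      (∏ k : Fin N, (Complex.sinh (extf u m + extf p m - v k - q k))⁻¹) = 1 := by
    have hsgn : (-1 : ℂ) ^ N = ∏ _j : Fin N, (-1 : ℂ) := by
      rw [prod_const, card_univ, Fintype.card_fin]
    rw [hsgn, ← prod_mul_distrib, ← prod_mul_distrib]
    refine Finset.prod_eq_one fun k _ => ?_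
    have hd : Complex.sinh (extf u m + extf p m - v k - q k) ≠ 0 := by
      rw [extf_apply u m hmm, extf_apply p m hmm]
      exact hden (Fin.last m) k
    rw [show v k - extf w T + q k - extf r T = -(extf u m + extf p m - v k - q k) by
        linear_combination huN,
      Complex.sinh_neg, neg_mul_neg, one_mul, mul_inv_cancel₀ hd]
  rw [eA, eD, eG, eGrow, eH, eI, eJ, eB, eC', eF', eG', esp, esr, eP1, eP2]
  linear_combination (extf sp m * extf sr T *
    (∏ k ∈ range T, Complex.sinh (extf w k - extf w T + extf r k - extf r T + 2 * extf p m)) *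
    (∏ k ∈ Ico (T + 1) M, Complex.sinh (extf w T - extf w k + extf r k + extf r T)) *
    (∏ j ∈ range m, extf sp j) * (∏ j : Fin N, sq j) *
    (∏ j ∈ range T, extf sr j) * extf sr T *
    (∏ j ∈ range m, ∏ k ∈ Ico (j + 1) m, Complex.sinh (extf u k - extf u j + extf p j + extf p k)) *
    (∏ j : Fin N, ∏ k ∈ Ioi j, Complex.sinh (v j - v k + q j + q k)) *
    (∏ j ∈ range T, ∏ k ∈ Ico (j + 1) T, Complex.sinh (extf w k - extf w j + extf r j + extf r k)) *
    (∏ j ∈ range T, Complex.sinh (extf w T - extf w j + extf r j + extf r T)) *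
    (∏ j ∈ range m, ∏ k ∈ range T, Complex.sinh (extf w k - extf u j + extf p j + extf r k)) *
    (∏ j ∈ range m, Complex.sinh (extf u m - extf u j + extf p j + extf p m)) *
    (∏ j : Fin N, ∏ k ∈ Ico (T + 1) M, Complex.sinh (v j - extf w k + q j - extf r k)) *
    (∏ j ∈ range m, ∏ k : Fin N, (Complex.sinh (extf u j + extf p j - v k - q k))⁻¹) *
    (∏ j ∈ range m, ((-1:ℂ) ^ N * ∏ k ∈ range M, Complex.sinh (extf u j + extf p j - extf w k + extf r k) +
        ∏ k ∈ range M, Complex.sinh (extf u j + extf p j - extf w k - extf r k)))) * hQZ
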